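/- Let F : ℝ^p → ℝ^p be L-Lipschitz continuous, T maximally 3-cyclically monotone, and x* a zero of F + T. Let (x^k, y^k) be generated by the golden-ratio scheme: y^k := ((τ-1)/τ)x^k + (1/τ)y^{k-1}, x^{k+1} := J_{ηT}(y^k - η Fx^k), with τ > 1. Then for any γ > 0: τ‖y^{k+1} - x*‖² + (τ-1)(τ-γ)‖x^{k+1} - x^k‖² ≤ τ‖y^k - x*‖² + ((τ-1)L²η²/γ)‖x^k - x^{k-1}‖² - ((τ-1)(1-τ²+τ)/τ)‖x^{k+1} - y^k‖² - τ(τ-1)‖x^k - y^k‖² - 2η(τ-1)⟨Fx^k - Fx*, x^k - x*⟩. -/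

import Mathlib

open scoped RealInnerProductSpace

theorem gr_aux (τ γ η L U V W S Cn Dn Y p1 p2 pf pg : ℝ)
    (hτ : 1 < τ) (hγ : 0 < γ)
    (h1 : η*pf - η*pg ≤ p1 + τ*p2)
    (h2 : 2*p1 = Cn - U - W)
    (h3 : 2*p2 = U - V - S)
    (h4 : τ^2*Y = τ*(τ-1)*W + τ*Cn - (τ-1)*U)
    (h5 : 2*γ*(η*pg) ≤ η^2*L^2*Dn + γ^2*S) :
    τ*Y + (τ-1)*(τ-γ)*S ≤ τ*Cn + ((τ-1)*L^2*η^2/γ)*Dn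
      - ((τ-1)*(1-τ^2+τ)/τ)*U - τ*(τ-1)*V - 2*η*(τ-1)*pf := by
  have hτ0 : (0:ℝ) < τ := by linarith
  have hpos : 0 < τ*γ := mul_pos hτ0 hγ
  have hm1 : (0:ℝ) ≤ 2*τ*γ*(τ-1) := by nlinarith
  have hm5 : (0:ℝ) ≤ τ*(τ-1) := by nlinarith
  have H1 := mul_le_mul_of_nonneg_left h1 hm1
  have H5 := mul_le_mul_of_nonneg_left h5 hm5
  have H2 : τ*γ*(τ-1)*(2*p1) = τ*γ*(τ-1)*(Cn - U - W) := by rw [h2]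
  have H3 : τ^2*γ*(τ-1)*(2*p2) = τ^2*γ*(τ-1)*(U - V - S) := by rw [h3]
  have H4 : γ*(τ^2*Y) = γ*(τ*(τ-1)*W + τ*Cn - (τ-1)*U) := by rw [h4]
  have key : 0 ≤ τ^2*γ*Cn + τ*(τ-1)*L^2*η^2*Dn - γ*(τ-1)*(1-τ^2+τ)*U
      - τ^2*γ*(τ-1)*V - 2*τ*γ*η*(τ-1)*pf - τ^2*γ*Y - τ*γ*(τ-1)*(τ-γ)*S := by
    nlinarith [H1, H2, H3, H4, H5]
  rw [← sub_nonneg]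
  have heq : τ*Cn + ((τ-1)*L^2*η^2/γ)*Dn - ((τ-1)*(1-τ^2+τ)/τ)*U - τ*(τ-1)*V
      - 2*η*(τ-1)*pf - (τ*Y + (τ-1)*(τ-γ)*S)
      = (τ^2*γ*Cn + τ*(τ-1)*L^2*η^2*Dn - γ*(τ-1)*(1-τ^2+τ)*U
        - τ^2*γ*(τ-1)*V - 2*τ*γ*η*(τ-1)*pf - τ^2*γ*Y - τ*γ*(τ-1)*(τ-γ)*S)/(τ*γ) := by
    field_simp
    ring
  rw [heq]
  exact div_nonneg key hpos.le

set_option maxHeartbeats 1000000 in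
theorem golden_ratio_key_estimate {p : ℕ}
    (F : EuclideanSpace ℝ (Fin p) → EuclideanSpace ℝ (Fin p))
    (L : ℝ) (hL0 : 0 ≤ L) (hL : ∀ a b, ‖F a - F b‖ ≤ L * ‖a - b‖)
    (T : EuclideanSpace ℝ (Fin p) → Set (EuclideanSpace ℝ (Fin p)))
    (hT3 : ∀ x₁ u₁ x₂ u₂ x₃ u₃, u₁ ∈ T x₁ → u₂ ∈ T x₂ → u₃ ∈ T x₃ →
      0 ≤ ⟪u₁, x₁ - x₂⟫ + ⟪u₂, x₂ - x₃⟫ + ⟪u₃, x₃ - x₁⟫)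
    (xs ξs : EuclideanSpace ℝ (Fin p)) (hξs : ξs ∈ T xs) (hzero : F xs + ξs = 0)
    (τ η : ℝ) (hτ : 1 < τ) (hη : 0 < η)
    (x y ξ : ℕ → EuclideanSpace ℝ (Fin p))
    (hy : ∀ k, y (k + 1) = ((τ - 1) / τ) • x (k + 1) + (1 / τ) • y k)
    (hξ : ∀ k, ξ (k + 1) ∈ T (x (k + 1)))
    (hx : ∀ k, x (k + 1) = y k - η • (F (x k) + ξ (k + 1))) :
    ∀ γ : ℝ, 0 < γ → ∀ k : ℕ,
      τ * ‖y (k + 2) - xs‖ ^ 2 + (τ - 1) * (τ - γ) * ‖x (k + 2) - x (k + 1)‖ ^ 2 ≤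
        τ * ‖y (k + 1) - xs‖ ^ 2
          + ((τ - 1) * L ^ 2 * η ^ 2 / γ) * ‖x (k + 1) - x k‖ ^ 2
          - ((τ - 1) * (1 - τ ^ 2 + τ) / τ) * ‖x (k + 2) - y (k + 1)‖ ^ 2
          - τ * (τ - 1) * ‖x (k + 1) - y (k + 1)‖ ^ 2
          - 2 * η * (τ - 1) * ⟪F (x (k + 1)) - F xs, x (k + 1) - xs⟫ := by
  intro γ hγ k
  have hτne : (τ:ℝ) ≠ 0 := by intro h; rw [h] at hτ; linarith
  have hidx : k + 1 + 1 = k + 2 := by omega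
  have hx1 : x (k+2) = y (k+1) - η • (F (x (k+1)) + ξ (k+2)) := by
    have h := hx (k+1); rwa [hidx] at h
  have hy1 : y (k+2) = ((τ-1)/τ) • x (k+2) + (1/τ) • y (k+1) := by
    have h := hy (k+1); rwa [hidx] at h
  have hξ2 : ξ (k+2) ∈ T (x (k+2)) := by
    have h := hξ (k+1); rwa [hidx] at h
  -- resolvent relations in subgradient form
  have e1 : η • ξ (k+2) = (y (k+1) - x (k+2)) - η • F (x (k+1)) := by
    rw [hx1]; module
  have e2' : η • ξ (k+1) = y k - x (k+1) - η • F (x k) := by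
    rw [hx k]; module
  have hyk : y k = τ • y (k+1) - (τ-1) • x (k+1) := by
    rw [hy k]; match_scalars <;> field_simp <;> ring
  have e2 : η • ξ (k+1) = τ • (y (k+1) - x (k+1)) - η • F (x k) := by
    rw [e2', hyk]; module
  have e3 : ξs = -F xs := eq_neg_of_add_eq_zero_right hzero
  -- 3-cyclic monotonicity
  have H := hT3 (x (k+2)) (ξ (k+2)) xs ξs (x (k+1)) (ξ (k+1)) hξ2 hξs (hξ k)
  have Hη : 0 ≤ ⟪η • ξ (k+2), x (k+2) - xs⟫ + ⟪η • ξs, xs - x (k+1)⟫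
      + ⟪η • ξ (k+1), x (k+1) - x (k+2)⟫ := by
    simp only [real_inner_smul_left]
    nlinarith [mul_nonneg hη.le H]
  rw [e1, e2, e3] at Hη
  -- key scalar inequality from monotonicity
  have h1 : η*⟪F (x (k+1)) - F xs, x (k+1) - xs⟫
      - η*⟪F (x (k+1)) - F (x k), x (k+1) - x (k+2)⟫
      ≤ ⟪y (k+1) - x (k+2), x (k+2) - xs⟫
        + τ*⟪y (k+1) - x (k+1), x (k+1) - x (k+2)⟫ := by
    simp only [inner_sub_left, inner_sub_right, real_inner_smul_left, smul_neg,
      inner_neg_left] at Hη ⊢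
    linarith [Hη]
  -- norm identities
  have h2 : 2*⟪y (k+1) - x (k+2), x (k+2) - xs⟫
      = ‖y (k+1) - xs‖^2 - ‖y (k+1) - x (k+2)‖^2 - ‖x (k+2) - xs‖^2 := by
    have h := norm_add_sq_real (y (k+1) - x (k+2)) (x (k+2) - xs)
    rw [show (y (k+1) - x (k+2)) + (x (k+2) - xs) = y (k+1) - xs from by abel] at h
    linarith
  have h3 : 2*⟪y (k+1) - x (k+1), x (k+1) - x (k+2)⟫
      = ‖y (k+1) - x (k+2)‖^2 - ‖y (k+1) - x (k+1)‖^2 - ‖x (k+1) - x (k+2)‖^2 := by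
    have h := norm_add_sq_real (y (k+1) - x (k+1)) (x (k+1) - x (k+2))
    rw [show (y (k+1) - x (k+1)) + (x (k+1) - x (k+2)) = y (k+1) - x (k+2) from by abel] at h
    linarith
  have hyv : τ • (y (k+2) - xs) = (τ-1) • (x (k+2) - xs) + (y (k+1) - xs) := by
    rw [hy1]; match_scalars <;> field_simp <;> ring
  have n1 : ‖τ • (y (k+2) - xs)‖^2 = τ^2 * ‖y (k+2) - xs‖^2 := by
    rw [norm_smul, mul_pow, Real.norm_eq_abs, sq_abs]
  have n2 : ‖τ • (y (k+2) - xs)‖^2 = ‖(τ-1) • (x (k+2) - xs) + (y (k+1) - xs)‖^2 := by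
    rw [hyv]
  have n3 : ‖(τ-1) • (x (k+2) - xs) + (y (k+1) - xs)‖^2
      = (τ-1)^2*‖x (k+2) - xs‖^2 + 2*((τ-1)*⟪x (k+2) - xs, y (k+1) - xs⟫)
        + ‖y (k+1) - xs‖^2 := by
    rw [norm_add_sq_real, norm_smul, mul_pow, Real.norm_eq_abs, sq_abs,
      real_inner_smul_left]
  have n4 : 2*⟪x (k+2) - xs, y (k+1) - xs⟫
      = ‖x (k+2) - xs‖^2 + ‖y (k+1) - xs‖^2 - ‖y (k+1) - x (k+2)‖^2 := by
    have h := norm_sub_sq_real (x (k+2) - xs) (y (k+1) - xs)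
    rw [show (x (k+2) - xs) - (y (k+1) - xs) = -(y (k+1) - x (k+2)) from by abel,
      norm_neg] at h
    linarith
  have h4 : τ^2*‖y (k+2) - xs‖^2
      = τ*(τ-1)*‖x (k+2) - xs‖^2 + τ*‖y (k+1) - xs‖^2
        - (τ-1)*‖y (k+1) - x (k+2)‖^2 := by
    linear_combination (-1)*n1 + n2 + n3 + (τ-1)*n4
  -- Lipschitz + Young
  have hb : ⟪F (x (k+1)) - F (x k), x (k+1) - x (k+2)⟫
      ≤ L*‖x (k+1) - x k‖*‖x (k+1) - x (k+2)‖ := by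
    calc ⟪F (x (k+1)) - F (x k), x (k+1) - x (k+2)⟫
        ≤ ‖F (x (k+1)) - F (x k)‖ * ‖x (k+1) - x (k+2)‖ := real_inner_le_norm _ _
      _ ≤ L*‖x (k+1) - x k‖*‖x (k+1) - x (k+2)‖ :=
          mul_le_mul_of_nonneg_right (hL _ _) (norm_nonneg _)
  have h5 : 2*γ*(η*⟪F (x (k+1)) - F (x k), x (k+1) - x (k+2)⟫)
      ≤ η^2*L^2*‖x (k+1) - x k‖^2 + γ^2*‖x (k+1) - x (k+2)‖^2 := by
    have hb2 := mul_le_mul_of_nonneg_left hb (show (0:ℝ) ≤ 2*γ*η by positivity)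
    have hy2 := sq_nonneg (η*L*‖x (k+1) - x k‖ - γ*‖x (k+1) - x (k+2)‖)
    nlinarith [hb2, hy2]
  rw [show ‖x (k+2) - y (k+1)‖ = ‖y (k+1) - x (k+2)‖ from norm_sub_rev _ _,
    show ‖x (k+1) - y (k+1)‖ = ‖y (k+1) - x (k+1)‖ from norm_sub_rev _ _,
    show ‖x (k+2) - x (k+1)‖ = ‖x (k+1) - x (k+2)‖ from norm_sub_rev _ _]
  exact gr_aux τ γ η L _ _ _ _ _ _ _ _ _ _ _ hτ hγ h1 h2 h3 h4 h5
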